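/- Every rotation R of ℝ⁴ (orthogonal linear map of determinant 1) can be decomposed as R = R₀ ∘ R^{xw}_ψ ∘ R^{zw}_φ ∘ R^{xy}_θ, where R₀ is the trivial extension to ℝ⁴ of a rotation of ℝ³ = {(x,y,z,0)} and R^{xw}_ψ, R^{zw}_φ, R^{xy}_θ are elementary rotations in the indicated coordinate two-planes. -/

import Mathlib

open Real

/-- Elementary rotation of ℝ⁴ in the x,w-plane. -/
noncomputable def Rxw (ψ : ℝ) : Matrix (Fin 4) (Fin 4) ℝ :=
  !![cos ψ, 0, 0, -sin ψ; 0, 1, 0, 0; 0, 0, 1, 0; sin ψ, 0, 0, cos ψ]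

/-- Elementary rotation of ℝ⁴ in the z,w-plane. -/
noncomputable def Rzw (φ : ℝ) : Matrix (Fin 4) (Fin 4) ℝ :=
  !![1, 0, 0, 0; 0, 1, 0, 0; 0, 0, cos φ, -sin φ; 0, 0, sin φ, cos φ]

/-- Elementary rotation of ℝ⁴ in the x,y-plane. -/
noncomputable def Rxy (θ : ℝ) : Matrix (Fin 4) (Fin 4) ℝ :=
  !![cos θ, -sin θ, 0, 0; sin θ, cos θ, 0, 0; 0, 0, 1, 0; 0, 0, 0, 1]

/-- The trivial extension to ℝ⁴ of a linear map of ℝ³ = {(x,y,z,0)}, fixing e₄. -/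
noncomputable def extend3 (N : Matrix (Fin 3) (Fin 3) ℝ) : Matrix (Fin 4) (Fin 4) ℝ :=
  !![N 0 0, N 0 1, N 0 2, 0;
     N 1 0, N 1 1, N 1 2, 0;
     N 2 0, N 2 1, N 2 2, 0;
     0, 0, 0, 1]

lemma hRxw_orth (ψ : ℝ) : Rxw ψ * (Rxw ψ).transpose = 1 := by
  ext i j
  simp only [Matrix.mul_apply, Matrix.transpose_apply, Fin.sum_univ_four]
  fin_cases i <;> fin_cases j <;>
    simp [Rxw, Matrix.one_apply, Matrix.vecHead, Matrix.vecTail] <;>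
    nlinarith [sin_sq_add_cos_sq ψ]

lemma hRzw_orth (φ : ℝ) : Rzw φ * (Rzw φ).transpose = 1 := by
  ext i j
  simp only [Matrix.mul_apply, Matrix.transpose_apply, Fin.sum_univ_four]
  fin_cases i <;> fin_cases j <;>
    simp [Rzw, Matrix.one_apply, Matrix.vecHead, Matrix.vecTail] <;>
    nlinarith [sin_sq_add_cos_sq φ]

lemma hRxy_orth (θ : ℝ) : Rxy θ * (Rxy θ).transpose = 1 := by
  ext i j
  simp only [Matrix.mul_apply, Matrix.transpose_apply, Fin.sum_univ_four]
  fin_cases i <;> fin_cases j <;>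
    simp [Rxy, Matrix.one_apply, Matrix.vecHead, Matrix.vecTail] <;>
    nlinarith [sin_sq_add_cos_sq θ]

lemma hRxw_det (ψ : ℝ) : (Rxw ψ).det = 1 := by
  simp [Rxw, Matrix.det_succ_row_zero, Fin.sum_univ_succ, Fin.succAbove,
    Fin.castSucc, Fin.castAdd, Fin.castLE]
  nlinarith [sin_sq_add_cos_sq ψ]

lemma hRzw_det (φ : ℝ) : (Rzw φ).det = 1 := by
  simp [Rzw, Matrix.det_succ_row_zero, Fin.sum_univ_succ, Fin.succAbove,
    Fin.castSucc, Fin.castAdd, Fin.castLE]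
  nlinarith [sin_sq_add_cos_sq φ]

lemma hRxy_det (θ : ℝ) : (Rxy θ).det = 1 := by
  simp [Rxy, Matrix.det_succ_row_zero, Fin.sum_univ_succ, Fin.succAbove,
    Fin.castSucc, Fin.castAdd, Fin.castLE]
  nlinarith [sin_sq_add_cos_sq θ]

lemma Prow (ψ φ θ : ℝ) (k : Fin 4) :
    (Rxw ψ * Rzw φ * Rxy θ) 3 k =
      ![sin ψ * cos θ, -(sin ψ * sin θ), cos ψ * sin φ, cos ψ * cos φ] k := by
  simp only [Matrix.mul_apply, Fin.sum_univ_four]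
  fin_cases k <;>
    (simp [Rxw, Rzw, Rxy, Matrix.vecHead, Matrix.vecTail]; try ring)

lemma circle_angle (x y : ℝ) (h : x^2 + y^2 = 1) : ∃ θ, Real.cos θ = x ∧ Real.sin θ = y := by
  have hx1 : -1 ≤ x := by nlinarith
  have hx2 : x ≤ 1 := by nlinarith
  rcases le_or_gt 0 y with hy | hy
  · refine ⟨Real.arccos x, Real.cos_arccos hx1 hx2, ?_⟩
    rw [Real.sin_arccos, show (1:ℝ) - x^2 = y^2 by linarith, Real.sqrt_sq hy]
  · refine ⟨-Real.arccos x, by rw [Real.cos_neg]; exact Real.cos_arccos hx1 hx2, ?_⟩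
    rw [Real.sin_neg, Real.sin_arccos, show (1:ℝ) - x^2 = y^2 by linarith,
      Real.sqrt_sq_eq_abs, abs_of_neg hy]; ring

lemma polar_angle (a b : ℝ) :
    ∃ θ, a = Real.sqrt (a^2 + b^2) * Real.cos θ ∧ b = Real.sqrt (a^2 + b^2) * Real.sin θ := by
  set r := Real.sqrt (a^2 + b^2) with hr
  have hr0 : 0 ≤ r := Real.sqrt_nonneg _
  have hr2 : r^2 = a^2 + b^2 := Real.sq_sqrt (by positivity)
  rcases eq_or_lt_of_le hr0 with h0 | hpos
  · have : a^2 + b^2 = 0 := by rw [← hr2, ← h0]; ring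
    have ha : a = 0 := by nlinarith
    have hb : b = 0 := by nlinarith
    exact ⟨0, by simp [ha, ← h0], by simp [hb]⟩
  · obtain ⟨θ, hc, hs⟩ := circle_angle (a/r) (b/r) (by field_simp; linarith [hr2])
    exact ⟨θ, by rw [hc]; field_simp, by rw [hs]; field_simp⟩

/-- Every rotation of ℝ⁴ decomposes as R₀ ∘ R^{xw}_ψ ∘ R^{zw}_φ ∘ R^{xy}_θ where
    R₀ is the trivial extension of a rotation of ℝ³. -/
theorem four_dim_decomposition (M : Matrix (Fin 4) (Fin 4) ℝ)
    (horth : M * M.transpose = 1) (hdet : M.det = 1) :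
    ∃ (N : Matrix (Fin 3) (Fin 3) ℝ) (θ φ ψ : ℝ),
      N * N.transpose = 1 ∧ N.det = 1 ∧
      M = extend3 N * Rxw ψ * Rzw φ * Rxy θ := by
  have huu : (M 3 0)^2 + (M 3 1)^2 + (M 3 2)^2 + (M 3 3)^2 = 1 := by
    have h := congrFun (congrFun horth 3) 3
    simp [Matrix.mul_apply, Matrix.transpose_apply, Fin.sum_univ_four, Matrix.one_apply] at h
    nlinarith [h]
  obtain ⟨θ, hθc, hθs⟩ := polar_angle (M 3 0) (-(M 3 1))
  rw [neg_sq] at hθc hθs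
  obtain ⟨φ, hφc, hφs⟩ := polar_angle (M 3 3) (M 3 2)
  obtain ⟨ψ, hψc, hψs⟩ := circle_angle (Real.sqrt ((M 3 3)^2 + (M 3 2)^2))
      (Real.sqrt ((M 3 0)^2 + (M 3 1)^2))
      (by rw [Real.sq_sqrt (by positivity), Real.sq_sqrt (by positivity)]; linarith)
  have hM30 : M 3 0 = sin ψ * cos θ := by rw [hθc, hψs]
  have hM31 : M 3 1 = -(sin ψ * sin θ) := by rw [← hψs] at hθs; linarith
  have hM32 : M 3 2 = cos ψ * sin φ := by rw [hφs, hψc]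
  have hM33 : M 3 3 = cos ψ * cos φ := by rw [hφc, hψc]
  set P := Rxw ψ * Rzw φ * Rxy θ with hPdef
  clear_value P
  have hProw : ∀ k, P 3 k = M 3 k := by
    intro k
    rw [hPdef, Prow]
    fin_cases k <;> simp [hM30, hM31, hM32, hM33]
  have hPP : P * P.transpose = 1 := by
    have h : P * P.transpose =
        Rxw ψ * (Rzw φ * (Rxy θ * (Rxy θ).transpose * ((Rzw φ).transpose * (Rxw ψ).transpose))) := by
      simp only [hPdef, Matrix.transpose_mul, Matrix.mul_assoc]
    rw [h, hRxy_orth, Matrix.one_mul, ← Matrix.mul_assoc (Rzw φ), hRzw_orth, Matrix.one_mul,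
      hRxw_orth]
  have hPtP : P.transpose * P = 1 := mul_eq_one_comm.mp hPP
  set M' := M * P.transpose with hM'def
  clear_value M'
  have hM'orth : M' * M'.transpose = 1 := by
    have h : M' * M'.transpose = M * (P.transpose * P) * M.transpose := by
      simp only [hM'def, Matrix.transpose_mul, Matrix.transpose_transpose, Matrix.mul_assoc]
    rw [h, hPtP, Matrix.mul_one, horth]
  have hrow : ∀ j, M' 3 j = (1 : Matrix (Fin 4) (Fin 4) ℝ) 3 j := by
    intro j
    have e1 : M' 3 j = ∑ k, P 3 k * P j k := by
      rw [hM'def]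
      simp only [Matrix.mul_apply, Matrix.transpose_apply]
      exact Finset.sum_congr rfl fun k _ => by rw [hProw k]
    have e2 : (P * P.transpose) 3 j = ∑ k, P 3 k * P j k := by
      simp [Matrix.mul_apply, Matrix.transpose_apply]
    rw [e1, ← e2, hPP]
  have hM'30 : M' 3 0 = 0 := by simpa [Matrix.one_apply] using hrow 0
  have hM'31 : M' 3 1 = 0 := by simpa [Matrix.one_apply] using hrow 1
  have hM'32 : M' 3 2 = 0 := by simpa [Matrix.one_apply] using hrow 2
  have hM'33 : M' 3 3 = 1 := by simpa [Matrix.one_apply] using hrow 3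
  have hc : M' 0 3 * M' 0 3 + M' 1 3 * M' 1 3 + M' 2 3 * M' 2 3 + M' 3 3 * M' 3 3 = 1 := by
    have h := congrFun (congrFun ((mul_eq_one_comm (M := Matrix (Fin 4) (Fin 4) ℝ)).mp hM'orth) 3) 3
    simpa [Matrix.mul_apply, Matrix.transpose_apply, Fin.sum_univ_four, Matrix.one_apply] using h
  rw [hM'33] at hc
  have hc03 : M' 0 3 = 0 := mul_self_eq_zero.mp (le_antisymm
    (by linarith [mul_self_nonneg (M' 1 3), mul_self_nonneg (M' 2 3)]) (mul_self_nonneg _))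
  have hc13 : M' 1 3 = 0 := mul_self_eq_zero.mp (le_antisymm
    (by linarith [mul_self_nonneg (M' 0 3), mul_self_nonneg (M' 2 3)]) (mul_self_nonneg _))
  have hc23 : M' 2 3 = 0 := mul_self_eq_zero.mp (le_antisymm
    (by linarith [mul_self_nonneg (M' 0 3), mul_self_nonneg (M' 1 3)]) (mul_self_nonneg _))
  set N : Matrix (Fin 3) (Fin 3) ℝ :=
    !![M' 0 0, M' 0 1, M' 0 2; M' 1 0, M' 1 1, M' 1 2; M' 2 0, M' 2 1, M' 2 2] with hNdef
  clear_value N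
  have hext : extend3 N = M' := by
    ext i j
    fin_cases i <;> fin_cases j <;>
      simp [extend3, hNdef, hM'30, hM'31, hM'32, hM'33, hc03, hc13, hc23,
        Matrix.vecHead, Matrix.vecTail]
  have key : ∀ i j : Fin 4,
      M' i 0 * M' j 0 + M' i 1 * M' j 1 + M' i 2 * M' j 2 + M' i 3 * M' j 3
        = (1 : Matrix (Fin 4) (Fin 4) ℝ) i j := by
    intro i j
    have h := congrFun (congrFun hM'orth i) j
    simpa [Matrix.mul_apply, Matrix.transpose_apply, Fin.sum_univ_four] using h
  have k00 : M' 0 0 * M' 0 0 + M' 0 1 * M' 0 1 + M' 0 2 * M' 0 2 = 1 := by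
    have h := key 0 0
    rw [hc03] at h
    simpa [Matrix.one_apply] using h
  have k01 : M' 0 0 * M' 1 0 + M' 0 1 * M' 1 1 + M' 0 2 * M' 1 2 = 0 := by
    have h := key 0 1
    rw [hc03] at h
    simpa [Matrix.one_apply] using h
  have k02 : M' 0 0 * M' 2 0 + M' 0 1 * M' 2 1 + M' 0 2 * M' 2 2 = 0 := by
    have h := key 0 2
    rw [hc03] at h
    simpa [Matrix.one_apply] using h
  have k10 : M' 1 0 * M' 0 0 + M' 1 1 * M' 0 1 + M' 1 2 * M' 0 2 = 0 := by
    have h := key 1 0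
    rw [hc13] at h
    simpa [Matrix.one_apply] using h
  have k11 : M' 1 0 * M' 1 0 + M' 1 1 * M' 1 1 + M' 1 2 * M' 1 2 = 1 := by
    have h := key 1 1
    rw [hc13] at h
    simpa [Matrix.one_apply] using h
  have k12 : M' 1 0 * M' 2 0 + M' 1 1 * M' 2 1 + M' 1 2 * M' 2 2 = 0 := by
    have h := key 1 2
    rw [hc13] at h
    simpa [Matrix.one_apply] using h
  have k20 : M' 2 0 * M' 0 0 + M' 2 1 * M' 0 1 + M' 2 2 * M' 0 2 = 0 := by
    have h := key 2 0
    rw [hc23] at h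
    simpa [Matrix.one_apply] using h
  have k21 : M' 2 0 * M' 1 0 + M' 2 1 * M' 1 1 + M' 2 2 * M' 1 2 = 0 := by
    have h := key 2 1
    rw [hc23] at h
    simpa [Matrix.one_apply] using h
  have k22 : M' 2 0 * M' 2 0 + M' 2 1 * M' 2 1 + M' 2 2 * M' 2 2 = 1 := by
    have h := key 2 2
    rw [hc23] at h
    simpa [Matrix.one_apply] using h
  have hNN : N * N.transpose = 1 := by
    ext i j
    fin_cases i <;> fin_cases j <;>
      simp [hNdef, Matrix.mul_apply, Matrix.transpose_apply, Fin.sum_univ_three,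
        Matrix.one_apply, Matrix.vecHead, Matrix.vecTail] <;>
      linarith [k00, k01, k02, k10, k11, k12, k20, k21, k22]
  have hPdet : P.det = 1 := by
    rw [hPdef, Matrix.det_mul, Matrix.det_mul, hRxw_det, hRzw_det, hRxy_det]; ring
  have hM'det : M'.det = 1 := by
    rw [hM'def, Matrix.det_mul, Matrix.det_transpose, hdet, hPdet]; ring
  have hNdet : N.det = 1 := by
    have h : (extend3 N).det = N.det := by
      simp [extend3, Matrix.det_succ_row_zero, Fin.sum_univ_succ, Fin.succAbove,
        Fin.castSucc, Fin.castAdd, Fin.castLE, Matrix.det_fin_three]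
    rw [← h, hext, hM'det]
  refine ⟨N, θ, φ, ψ, hNN, hNdet, ?_⟩
  have hfinal : extend3 N * P = M := by
    rw [hext, hM'def, Matrix.mul_assoc, hPtP, Matrix.mul_one]
  rw [← hfinal, hPdef]
  simp [Matrix.mul_assoc]
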